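/- If gcd(r₁r₂, s₁s₂) = 1, then Ŝ_{r₁,s₁,r₂,s₂}(0, 0, 0, 0; D₁, D₂) = 0 unless D₁ = D₂, and in the case D₁ = D₂ = D it equals Euler's totient φ(D). -/

import Mathlib

open scoped BigOperators

/-- e(x) = exp(2πix). -/
noncomputable def e (x : ℝ) : ℂ := Complex.exp (2 * Real.pi * Complex.I * x)

/-- A choice of a pair `(Y, Z)` with `Y·b + Z·c ≡ 1 (mod D)`, when one exists. -/
noncomputable def YZ (D : ℕ) (b c : ℤ) : ℤ × ℤ :=
  letI := Classical.propDecidable (∃ p : ℤ × ℤ, p.1 * b + p.2 * c ≡ 1 [ZMOD (D : ℤ)])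
  if h : ∃ p : ℤ × ℤ, p.1 * b + p.2 * c ≡ 1 [ZMOD (D : ℤ)] then h.choose else (0, 0)

/-- The long Weyl element GL(3) Kloosterman sum
`S(n₁,m₂,m₁,n₂;D₁,D₂) = ∑ e((n₁B₁ + m₁(Y₁D₂ − Z₁B₂))/D₁ + (m₂B₂ + n₂(Y₂D₁ − Z₂B₁))/D₂)`,
where the sum runs over `B₁,C₁ mod D₁` and `B₂,C₂ mod D₂` with `gcd(B_j,C_j,D_j)=1` and
`D₁C₂ + B₁B₂ + D₂C₁ ≡ 0 mod D₁D₂`, and `Y_jB_j + Z_jC_j ≡ 1 mod D_j`. -/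
noncomputable def SKl (n₁ m₂ m₁ n₂ : ℤ) (D₁ D₂ : ℕ) : ℂ :=
  ∑ b₁ ∈ Finset.range D₁, ∑ c₁ ∈ Finset.range D₁,
    ∑ b₂ ∈ Finset.range D₂, ∑ c₂ ∈ Finset.range D₂,
      if Nat.gcd (Nat.gcd b₁ c₁) D₁ = 1 ∧ Nat.gcd (Nat.gcd b₂ c₂) D₂ = 1 ∧
          (D₁ : ℤ) * c₂ + (b₁ : ℤ) * b₂ + (D₂ : ℤ) * c₁ ≡ 0 [ZMOD ((D₁ : ℤ) * D₂)] then
        e ((((n₁ * b₁ + m₁ * ((YZ D₁ (b₁ : ℤ) (c₁ : ℤ)).1 * D₂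
                - (YZ D₁ (b₁ : ℤ) (c₁ : ℤ)).2 * b₂) : ℤ)) : ℝ) / (D₁ : ℝ)
          + (((m₂ * b₂ + n₂ * ((YZ D₂ (b₂ : ℤ) (c₂ : ℤ)).1 * D₁
                - (YZ D₂ (b₂ : ℤ) (c₂ : ℤ)).2 * b₁) : ℤ)) : ℝ) / (D₂ : ℝ))
      else 0

/-- The normalized Fourier transform of the long Weyl element Kloosterman sum:
`Ŝ_{r₁,s₁,r₂,s₂}(x₁,y₁,x₂,y₂;D₁,D₂) = (1/(D₁²D₂²)) ∑_{n₁,m₁ mod D₁} ∑_{n₂,m₂ mod D₂}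
  S(n₁r₁, m₂r₂, m₁s₁, n₂s₂; D₁,D₂) e(−(x₁m₁+y₁n₁)/D₁ − (x₂m₂+y₂n₂)/D₂)`. -/
noncomputable def Shat (r₁ s₁ r₂ s₂ x₁ y₁ x₂ y₂ : ℤ) (D₁ D₂ : ℕ) : ℂ :=
  (1 / ((D₁ : ℂ) ^ 2 * (D₂ : ℂ) ^ 2)) *
    ∑ n₁ ∈ Finset.range D₁, ∑ m₁ ∈ Finset.range D₁,
      ∑ n₂ ∈ Finset.range D₂, ∑ m₂ ∈ Finset.range D₂,
        SKl ((n₁ : ℤ) * r₁) ((m₂ : ℤ) * r₂) ((m₁ : ℤ) * s₁) ((n₂ : ℤ) * s₂) D₁ D₂ *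
          e (-(((x₁ * (m₁ : ℤ) + y₁ * (n₁ : ℤ) : ℤ) : ℝ) / (D₁ : ℝ))
            - ((x₂ * (m₂ : ℤ) + y₂ * (n₂ : ℤ) : ℤ) : ℝ) / (D₂ : ℝ))

/-! ### auxiliary lemmas about `e` -/

lemma e_add (x y : ℝ) : e (x + y) = e x * e y := by
  simp only [e, ← Complex.exp_add]; congr 1; push_cast; ring

lemma e_zero : e 0 = 1 := by simp [e]

lemma e_int (k : ℤ) : e k = 1 := by
  simp only [e]
  rw [show 2 * (Real.pi:ℂ) * Complex.I * (k:ℝ) = (k:ℤ) * (2 * Real.pi * Complex.I) by push_cast; ring]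
  exact Complex.exp_int_mul_two_pi_mul_I k

lemma e_pow (x : ℝ) (n : ℕ) : e x ^ n = e (n * x) := by
  simp only [e, ← Complex.exp_nat_mul]; congr 1; push_cast; ring

lemma charSum (D : ℕ) (hD : 0 < D) (A : ℤ) :
    ∑ n ∈ Finset.range D, e (((n : ℤ) * A : ℤ) / (D : ℝ)) = if (D:ℤ) ∣ A then (D:ℂ) else 0 := by
  have hDR : (D:ℝ) ≠ 0 := Nat.cast_ne_zero.mpr hD.ne'
  have hterm : ∀ n : ℕ, e (((n : ℤ) * A : ℤ) / (D : ℝ)) = e ((A:ℝ)/D) ^ n := by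
    intro n; rw [e_pow]; congr 1; push_cast; ring
  simp only [hterm]
  by_cases h : (D:ℤ) ∣ A
  · obtain ⟨k, hk⟩ := h
    have h1 : e ((A:ℝ)/D) = 1 := by
      rw [show (A:ℝ)/(D:ℝ) = ((k:ℤ):ℝ) by rw [hk]; push_cast; field_simp]
      exact e_int k
    rw [if_pos ⟨k, hk⟩, h1]
    simp
  · rw [if_neg h]
    have hne : e ((A:ℝ)/D) ≠ 1 := by
      intro hc
      simp only [e] at hc
      rw [Complex.exp_eq_one_iff] at hc
      obtain ⟨n, hn⟩ := hc
      have hpi : (2 * (Real.pi:ℂ) * Complex.I) ≠ 0 := by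
        simp [Real.pi_ne_zero, Complex.I_ne_zero]
      have h2 : (((A:ℝ)/D : ℝ) : ℂ) = (n:ℂ) := by
        rw [show 2 * (Real.pi:ℂ) * Complex.I * (((A:ℝ)/D : ℝ):ℂ)
              = (((A:ℝ)/D : ℝ):ℂ) * (2 * (Real.pi:ℂ) * Complex.I) by ring] at hn
        exact mul_right_cancel₀ hpi hn
      have h3 : ((A:ℝ)/D) = (n:ℝ) := by exact_mod_cast h2
      apply h
      refine ⟨n, ?_⟩
      have h4 : (A:ℝ) = (D:ℝ) * n := by field_simp at h3; linarith
      exact_mod_cast h4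
    rw [geom_sum_eq hne]
    have hD1 : e ((A:ℝ)/D) ^ D = 1 := by
      rw [e_pow, show (D:ℝ) * ((A:ℝ)/D) = ((A:ℤ):ℝ) by field_simp]
      exact e_int A
    rw [hD1]; simp

/-! ### auxiliary lemmas about `YZ` -/

lemma YZ_ex (D : ℕ) (b c : ℕ) (h : Nat.gcd (Nat.gcd b c) D = 1) :
    ∃ p : ℤ × ℤ, p.1 * (b:ℤ) + p.2 * (c:ℤ) ≡ 1 [ZMOD (D : ℤ)] := by
  have hg : IsCoprime (Nat.gcd b c : ℤ) (D : ℤ) := by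
    rw [Int.isCoprime_iff_gcd_eq_one]
    simpa [Int.gcd_natCast_natCast] using h
  obtain ⟨u, v, huv⟩ := hg
  have hbez : (Nat.gcd b c : ℤ) = (b:ℤ) * Int.gcdA b c + (c:ℤ) * Int.gcdB b c := by
    have := Int.gcd_eq_gcd_ab (b:ℤ) (c:ℤ)
    simpa [Int.gcd_natCast_natCast] using this
  refine ⟨(u * Int.gcdA b c, u * Int.gcdB b c), ?_⟩
  have key : (1:ℤ) - ((u * Int.gcdA b c) * (b:ℤ) + (u * Int.gcdB b c) * (c:ℤ)) = (D:ℤ) * v := by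
    rw [show (1:ℤ) = u * (Nat.gcd b c : ℤ) + v * D from huv.symm, hbez]; ring
  exact Int.modEq_iff_dvd.mpr ⟨v, key⟩

lemma YZ_spec (D : ℕ) (b c : ℤ) (h : ∃ p : ℤ × ℤ, p.1 * b + p.2 * c ≡ 1 [ZMOD (D : ℤ)]) :
    (YZ D b c).1 * b + (YZ D b c).2 * c ≡ 1 [ZMOD (D : ℤ)] := by
  unfold YZ
  split
  · next h' => exact h'.choose_spec
  · next h' => exact absurd h h'

lemma YZ_spec' (D : ℕ) (b c : ℕ) (h : Nat.gcd (Nat.gcd b c) D = 1) :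
    (D:ℤ) ∣ (YZ D (b:ℤ) (c:ℤ)).1 * (b:ℤ) + (YZ D (b:ℤ) (c:ℤ)).2 * (c:ℤ) - 1 := by
  have h3 := Int.modEq_iff_dvd.mp (YZ_spec D (b:ℤ) (c:ℤ) (YZ_ex D b c h))
  exact dvd_sub_comm.mp h3

/-! ### sum manipulation -/

section swap
variable {M : Type*} [AddCommMonoid M]

lemma swap1 (s t₁ t₂ t₃ t₄ : Finset ℕ) (f : ℕ → ℕ → ℕ → ℕ → ℕ → M) :
    ∑ a ∈ s, ∑ w ∈ t₁, ∑ x ∈ t₂, ∑ y ∈ t₃, ∑ z ∈ t₄, f a w x y z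
      = ∑ w ∈ t₁, ∑ x ∈ t₂, ∑ y ∈ t₃, ∑ z ∈ t₄, ∑ a ∈ s, f a w x y z := by
  rw [Finset.sum_comm]
  refine Finset.sum_congr rfl fun w _ => ?_
  rw [Finset.sum_comm]
  refine Finset.sum_congr rfl fun x _ => ?_
  rw [Finset.sum_comm]
  refine Finset.sum_congr rfl fun y _ => ?_
  rw [Finset.sum_comm]

lemma swap4 (s₁ s₂ s₃ s₄ t₁ t₂ t₃ t₄ : Finset ℕ) (f : ℕ → ℕ → ℕ → ℕ → ℕ → ℕ → ℕ → ℕ → M) :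
    ∑ a ∈ s₁, ∑ b ∈ s₂, ∑ c ∈ s₃, ∑ d ∈ s₄, ∑ w ∈ t₁, ∑ x ∈ t₂, ∑ y ∈ t₃, ∑ z ∈ t₄, f a b c d w x y z
      = ∑ w ∈ t₁, ∑ x ∈ t₂, ∑ y ∈ t₃, ∑ z ∈ t₄, ∑ a ∈ s₁, ∑ b ∈ s₂, ∑ c ∈ s₃, ∑ d ∈ s₄, f a b c d w x y z := by
  have h1 : ∀ a ∈ s₁, ∑ b ∈ s₂, ∑ c ∈ s₃, ∑ d ∈ s₄, ∑ w ∈ t₁, ∑ x ∈ t₂, ∑ y ∈ t₃, ∑ z ∈ t₄, f a b c d w x y z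
      = ∑ w ∈ t₁, ∑ x ∈ t₂, ∑ y ∈ t₃, ∑ z ∈ t₄, ∑ b ∈ s₂, ∑ c ∈ s₃, ∑ d ∈ s₄, f a b c d w x y z := by
    intro a _
    have h2 : ∀ b ∈ s₂, ∑ c ∈ s₃, ∑ d ∈ s₄, ∑ w ∈ t₁, ∑ x ∈ t₂, ∑ y ∈ t₃, ∑ z ∈ t₄, f a b c d w x y z
        = ∑ w ∈ t₁, ∑ x ∈ t₂, ∑ y ∈ t₃, ∑ z ∈ t₄, ∑ c ∈ s₃, ∑ d ∈ s₄, f a b c d w x y z := by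
      intro b _
      have h3 : ∀ c ∈ s₃, ∑ d ∈ s₄, ∑ w ∈ t₁, ∑ x ∈ t₂, ∑ y ∈ t₃, ∑ z ∈ t₄, f a b c d w x y z
          = ∑ w ∈ t₁, ∑ x ∈ t₂, ∑ y ∈ t₃, ∑ z ∈ t₄, ∑ d ∈ s₄, f a b c d w x y z :=
        fun c _ => swap1 s₄ t₁ t₂ t₃ t₄ (fun d w x y z => f a b c d w x y z)
      rw [Finset.sum_congr rfl h3,
        swap1 s₃ t₁ t₂ t₃ t₄ (fun c w x y z => ∑ d ∈ s₄, f a b c d w x y z)]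
    rw [Finset.sum_congr rfl h2,
      swap1 s₂ t₁ t₂ t₃ t₄ (fun b w x y z => ∑ c ∈ s₃, ∑ d ∈ s₄, f a b c d w x y z)]
  rw [Finset.sum_congr rfl h1,
    swap1 s₁ t₁ t₂ t₃ t₄ (fun a w x y z => ∑ b ∈ s₂, ∑ c ∈ s₃, ∑ d ∈ s₄, f a b c d w x y z)]

lemma sum4_factor (s₁ s₂ s₃ s₄ : Finset ℕ) (f g h k : ℕ → ℂ) :
    ∑ a ∈ s₁, ∑ b ∈ s₂, ∑ c ∈ s₃, ∑ d ∈ s₄, f a * g b * h c * k d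
      = (∑ a ∈ s₁, f a) * (∑ b ∈ s₂, g b) * (∑ c ∈ s₃, h c) * (∑ d ∈ s₄, k d) := by
  simp only [← Finset.sum_mul, ← Finset.mul_sum]

end swap

/-! ### evaluating the inner character sums -/

lemma ite_prod4 (p₁ p₂ p₃ p₄ : Prop) [Decidable p₁] [Decidable p₂] [Decidable p₃] [Decidable p₄]
    (A B C E : ℂ) :
    (if p₁ then A else 0) * (if p₂ then B else 0) * (if p₃ then C else 0) * (if p₄ then E else 0)
      = if p₁ ∧ p₂ ∧ p₃ ∧ p₄ then A * B * C * E else 0 := by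
  by_cases h₁ : p₁ <;> by_cases h₂ : p₂ <;> by_cases h₃ : p₃ <;> by_cases h₄ : p₄ <;>
    simp [h₁, h₂, h₃, h₄]

lemma inner_eval (r₁ s₁ r₂ s₂ : ℤ) (D₁ D₂ : ℕ) (hD₁ : 0 < D₁) (hD₂ : 0 < D₂) (b₁ c₁ b₂ c₂ : ℕ) :
    (∑ n₁ ∈ Finset.range D₁, ∑ m₁ ∈ Finset.range D₁,
      ∑ n₂ ∈ Finset.range D₂, ∑ m₂ ∈ Finset.range D₂,
      (if Nat.gcd (Nat.gcd b₁ c₁) D₁ = 1 ∧ Nat.gcd (Nat.gcd b₂ c₂) D₂ = 1 ∧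
          (D₁ : ℤ) * c₂ + (b₁ : ℤ) * b₂ + (D₂ : ℤ) * c₁ ≡ 0 [ZMOD ((D₁ : ℤ) * D₂)] then
        e ((((((n₁:ℤ) * r₁) * b₁ + ((m₁:ℤ) * s₁) * ((YZ D₁ (b₁ : ℤ) (c₁ : ℤ)).1 * D₂
                - (YZ D₁ (b₁ : ℤ) (c₁ : ℤ)).2 * b₂) : ℤ)) : ℝ) / (D₁ : ℝ)
          + ((((m₂:ℤ) * r₂) * b₂ + ((n₂:ℤ) * s₂) * ((YZ D₂ (b₂ : ℤ) (c₂ : ℤ)).1 * D₁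
                - (YZ D₂ (b₂ : ℤ) (c₂ : ℤ)).2 * b₁) : ℤ) : ℝ) / (D₂ : ℝ))
      else 0))
    = if (Nat.gcd (Nat.gcd b₁ c₁) D₁ = 1 ∧ Nat.gcd (Nat.gcd b₂ c₂) D₂ = 1 ∧
          (D₁ : ℤ) * c₂ + (b₁ : ℤ) * b₂ + (D₂ : ℤ) * c₁ ≡ 0 [ZMOD ((D₁ : ℤ) * D₂)])
        ∧ (D₁:ℤ) ∣ r₁ * b₁
        ∧ (D₁:ℤ) ∣ s₁ * ((YZ D₁ (b₁:ℤ) (c₁:ℤ)).1 * D₂ - (YZ D₁ (b₁:ℤ) (c₁:ℤ)).2 * b₂)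
        ∧ (D₂:ℤ) ∣ s₂ * ((YZ D₂ (b₂:ℤ) (c₂:ℤ)).1 * D₁ - (YZ D₂ (b₂:ℤ) (c₂:ℤ)).2 * b₁)
        ∧ (D₂:ℤ) ∣ r₂ * b₂
      then (D₁:ℂ)^2 * (D₂:ℂ)^2 else 0 := by
  set W₁ : ℤ := (YZ D₁ (b₁:ℤ) (c₁:ℤ)).1 * D₂ - (YZ D₁ (b₁:ℤ) (c₁:ℤ)).2 * b₂ with hW₁
  set W₂ : ℤ := (YZ D₂ (b₂:ℤ) (c₂:ℤ)).1 * D₁ - (YZ D₂ (b₂:ℤ) (c₂:ℤ)).2 * b₁ with hW₂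
  by_cases hP : Nat.gcd (Nat.gcd b₁ c₁) D₁ = 1 ∧ Nat.gcd (Nat.gcd b₂ c₂) D₂ = 1 ∧
      (D₁ : ℤ) * c₂ + (b₁ : ℤ) * b₂ + (D₂ : ℤ) * c₁ ≡ 0 [ZMOD ((D₁ : ℤ) * D₂)]
  · simp only [if_pos hP]
    have hphase : ∀ n₁ m₁ n₂ m₂ : ℕ,
        e ((((((n₁:ℤ) * r₁) * b₁ + ((m₁:ℤ) * s₁) * W₁ : ℤ)) : ℝ) / (D₁ : ℝ)
          + ((((m₂:ℤ) * r₂) * b₂ + ((n₂:ℤ) * s₂) * W₂ : ℤ) : ℝ) / (D₂ : ℝ))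
        = e ((((n₁:ℤ) * (r₁ * b₁) : ℤ) : ℝ) / (D₁:ℝ)) * e ((((m₁:ℤ) * (s₁ * W₁) : ℤ) : ℝ) / (D₁:ℝ))
          * e ((((n₂:ℤ) * (s₂ * W₂) : ℤ) : ℝ) / (D₂:ℝ)) * e ((((m₂:ℤ) * (r₂ * b₂) : ℤ) : ℝ) / (D₂:ℝ)) := by
      intro n₁ m₁ n₂ m₂
      rw [show (((((n₁:ℤ) * r₁) * b₁ + ((m₁:ℤ) * s₁) * W₁ : ℤ)) : ℝ) / (D₁ : ℝ)
          + ((((m₂:ℤ) * r₂) * b₂ + ((n₂:ℤ) * s₂) * W₂ : ℤ) : ℝ) / (D₂ : ℝ)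
          = (((n₁:ℤ) * (r₁ * b₁) : ℤ) : ℝ) / (D₁:ℝ) + (((m₁:ℤ) * (s₁ * W₁) : ℤ) : ℝ) / (D₁:ℝ)
            + (((n₂:ℤ) * (s₂ * W₂) : ℤ) : ℝ) / (D₂:ℝ) + (((m₂:ℤ) * (r₂ * b₂) : ℤ) : ℝ) / (D₂:ℝ)
          by push_cast; ring, e_add, e_add, e_add]
    simp only [hphase]
    rw [sum4_factor, charSum D₁ hD₁ (r₁ * b₁), charSum D₁ hD₁ (s₁ * W₁),
      charSum D₂ hD₂ (s₂ * W₂), charSum D₂ hD₂ (r₂ * b₂), ite_prod4]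
    rw [show ((D₁:ℂ) * D₁ * D₂ * D₂) = (D₁:ℂ)^2 * (D₂:ℂ)^2 by ring]
    congr 1
    rw [eq_iff_iff]
    tauto
  · simp only [if_neg hP, Finset.sum_const_zero]
    rw [if_neg]
    tauto

lemma shat_eq_count (r₁ s₁ r₂ s₂ : ℤ) (D₁ D₂ : ℕ) (hD₁ : 0 < D₁) (hD₂ : 0 < D₂) :
    Shat r₁ s₁ r₂ s₂ 0 0 0 0 D₁ D₂
      = ∑ b₁ ∈ Finset.range D₁, ∑ c₁ ∈ Finset.range D₁,
          ∑ b₂ ∈ Finset.range D₂, ∑ c₂ ∈ Finset.range D₂,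
        if (Nat.gcd (Nat.gcd b₁ c₁) D₁ = 1 ∧ Nat.gcd (Nat.gcd b₂ c₂) D₂ = 1 ∧
              (D₁ : ℤ) * c₂ + (b₁ : ℤ) * b₂ + (D₂ : ℤ) * c₁ ≡ 0 [ZMOD ((D₁ : ℤ) * D₂)])
            ∧ (D₁:ℤ) ∣ r₁ * b₁
            ∧ (D₁:ℤ) ∣ s₁ * ((YZ D₁ (b₁:ℤ) (c₁:ℤ)).1 * D₂ - (YZ D₁ (b₁:ℤ) (c₁:ℤ)).2 * b₂)
            ∧ (D₂:ℤ) ∣ s₂ * ((YZ D₂ (b₂:ℤ) (c₂:ℤ)).1 * D₁ - (YZ D₂ (b₂:ℤ) (c₂:ℤ)).2 * b₁)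
            ∧ (D₂:ℤ) ∣ r₂ * b₂
          then (1:ℂ) else 0 := by
  have hN : ((D₁:ℂ)^2 * (D₂:ℂ)^2) ≠ 0 := by
    have h1 : (D₁:ℂ) ≠ 0 := Nat.cast_ne_zero.mpr hD₁.ne'
    have h2 : (D₂:ℂ) ≠ 0 := Nat.cast_ne_zero.mpr hD₂.ne'
    exact mul_ne_zero (pow_ne_zero _ h1) (pow_ne_zero _ h2)
  unfold Shat SKl
  simp only [zero_mul, add_zero, Int.cast_zero, zero_div, neg_zero, sub_zero, e_zero, mul_one]
  rw [swap4]
  have hstep : ∀ b₁ ∈ Finset.range D₁, (∑ c₁ ∈ Finset.range D₁, ∑ b₂ ∈ Finset.range D₂,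
      ∑ c₂ ∈ Finset.range D₂, ∑ n₁ ∈ Finset.range D₁, ∑ m₁ ∈ Finset.range D₁,
      ∑ n₂ ∈ Finset.range D₂, ∑ m₂ ∈ Finset.range D₂,
      (if Nat.gcd (Nat.gcd b₁ c₁) D₁ = 1 ∧ Nat.gcd (Nat.gcd b₂ c₂) D₂ = 1 ∧
          (D₁ : ℤ) * c₂ + (b₁ : ℤ) * b₂ + (D₂ : ℤ) * c₁ ≡ 0 [ZMOD ((D₁ : ℤ) * D₂)] then
        e ((((((n₁:ℤ) * r₁) * b₁ + ((m₁:ℤ) * s₁) * ((YZ D₁ (b₁ : ℤ) (c₁ : ℤ)).1 * D₂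
                - (YZ D₁ (b₁ : ℤ) (c₁ : ℤ)).2 * b₂) : ℤ)) : ℝ) / (D₁ : ℝ)
          + ((((m₂:ℤ) * r₂) * b₂ + ((n₂:ℤ) * s₂) * ((YZ D₂ (b₂ : ℤ) (c₂ : ℤ)).1 * D₁
                - (YZ D₂ (b₂ : ℤ) (c₂ : ℤ)).2 * b₁) : ℤ) : ℝ) / (D₂ : ℝ))
      else 0))
      = ∑ c₁ ∈ Finset.range D₁, ∑ b₂ ∈ Finset.range D₂, ∑ c₂ ∈ Finset.range D₂,
        if (Nat.gcd (Nat.gcd b₁ c₁) D₁ = 1 ∧ Nat.gcd (Nat.gcd b₂ c₂) D₂ = 1 ∧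
              (D₁ : ℤ) * c₂ + (b₁ : ℤ) * b₂ + (D₂ : ℤ) * c₁ ≡ 0 [ZMOD ((D₁ : ℤ) * D₂)])
            ∧ (D₁:ℤ) ∣ r₁ * b₁
            ∧ (D₁:ℤ) ∣ s₁ * ((YZ D₁ (b₁:ℤ) (c₁:ℤ)).1 * D₂ - (YZ D₁ (b₁:ℤ) (c₁:ℤ)).2 * b₂)
            ∧ (D₂:ℤ) ∣ s₂ * ((YZ D₂ (b₂:ℤ) (c₂:ℤ)).1 * D₁ - (YZ D₂ (b₂:ℤ) (c₂:ℤ)).2 * b₁)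
            ∧ (D₂:ℤ) ∣ r₂ * b₂
          then ((D₁:ℂ)^2 * (D₂:ℂ)^2) else 0 := by
    intro b₁ _
    refine Finset.sum_congr rfl fun c₁ _ => ?_
    refine Finset.sum_congr rfl fun b₂ _ => ?_
    refine Finset.sum_congr rfl fun c₂ _ => ?_
    exact inner_eval r₁ s₁ r₂ s₂ D₁ D₂ hD₁ hD₂ b₁ c₁ b₂ c₂
  rw [Finset.sum_congr rfl hstep]
  have hpull : ∀ (p : Prop) [Decidable p],
      (if p then ((D₁:ℂ)^2 * (D₂:ℂ)^2) else 0) = ((D₁:ℂ)^2 * (D₂:ℂ)^2) * (if p then 1 else 0) := by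
    intro p _; split <;> simp
  simp only [hpull, ← Finset.mul_sum]
  rw [← mul_assoc, one_div, inv_mul_cancel₀ hN, one_mul]

/-! ### number-theoretic core -/

lemma sb2_dvd (D₁ D₂ : ℕ) (s₁ b₁ c₁ b₂ c₂ Y₁ Z₁ : ℤ)
    (hmain : (D₁:ℤ) ∣ (D₁:ℤ) * c₂ + b₁ * b₂ + (D₂:ℤ) * c₁)
    (hYZ : (D₁:ℤ) ∣ Y₁ * b₁ + Z₁ * c₁ - 1)
    (h5 : (D₁:ℤ) ∣ s₁ * (Y₁ * (D₂:ℤ) - Z₁ * b₂)) : (D₁:ℤ) ∣ s₁ * b₂ := by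
  have key : s₁ * b₂ = (s₁ * Y₁) * ((D₁:ℤ) * c₂ + b₁ * b₂ + (D₂:ℤ) * c₁)
      - (D₁:ℤ) * (s₁ * Y₁ * c₂) - (s₁ * b₂) * (Y₁ * b₁ + Z₁ * c₁ - 1)
      - c₁ * (s₁ * (Y₁ * (D₂:ℤ) - Z₁ * b₂)) := by ring
  rw [key]
  exact dvd_sub (dvd_sub (dvd_sub (hmain.mul_left _) (Dvd.intro _ rfl)) (hYZ.mul_left _))
    (h5.mul_left _)

lemma core_contra (p : ℕ) (hp : p.Prime) (t : ℕ) (D₁ D₂ : ℕ)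
    (hpa : (p:ℤ)^(t+1) ∣ (D₁:ℤ)) (hpb : (p:ℤ)^t ∣ (D₂:ℤ)) (hpb1 : ¬ (p:ℤ)^(t+1) ∣ (D₂:ℤ))
    (r₁ s₁ : ℤ) (hrs : ¬((p:ℤ) ∣ r₁ ∧ (p:ℤ) ∣ s₁))
    (b₁ c₁ b₂ c₂ Y₁ Z₁ : ℤ)
    (hmain : (D₁:ℤ) ∣ (D₁:ℤ) * c₂ + b₁ * b₂ + (D₂:ℤ) * c₁)
    (hYZ : (D₁:ℤ) ∣ Y₁ * b₁ + Z₁ * c₁ - 1)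
    (h3 : (D₁:ℤ) ∣ r₁ * b₁)
    (h5 : (D₁:ℤ) ∣ s₁ * (Y₁ * (D₂:ℤ) - Z₁ * b₂))
    (hg : ¬((p:ℤ) ∣ b₁ ∧ (p:ℤ) ∣ c₁)) : False := by
  set q : ℤ := (p:ℤ) with hq
  have hqprime : Prime q := Nat.prime_iff_prime_int.mp hp
  have hqt : q^t ≠ 0 := pow_ne_zero _ (by simp [hq]; exact_mod_cast hp.ne_zero)
  obtain ⟨u, hu⟩ := hpb
  have hpu : ¬ q ∣ u := by
    intro ⟨w, hw⟩
    exact hpb1 ⟨w, by rw [hu, hw]; ring⟩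
  have hqD₁ : q ∣ (D₁:ℤ) := (dvd_pow_self q (Nat.succ_ne_zero t)).trans hpa
  have h5c : (D₁:ℤ) ∣ s₁ * b₂ := sb2_dvd D₁ D₂ s₁ b₁ c₁ b₂ c₂ Y₁ Z₁ hmain hYZ h5
  -- p ∣ s₁
  have hps₁ : q ∣ s₁ := by
    by_contra hns
    have hcops : IsCoprime (q^(t+1)) s₁ :=
      ((hqprime.coprime_iff_not_dvd).mpr hns).pow_left
    have hb₂ : q^(t+1) ∣ b₂ := hcops.dvd_of_dvd_mul_left (hpa.trans h5c)
    have h5' : q^(t+1) ∣ (Y₁ * (D₂:ℤ) - Z₁ * b₂) := hcops.dvd_of_dvd_mul_left (hpa.trans h5)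
    have hYD : q^(t+1) ∣ Y₁ * (D₂:ℤ) := by
      have : Y₁ * (D₂:ℤ) = (Y₁ * (D₂:ℤ) - Z₁ * b₂) + Z₁ * b₂ := by ring
      rw [this]
      exact dvd_add h5' (hb₂.mul_left _)
    have hY : q ∣ Y₁ := by
      rw [hu] at hYD
      have h' : q^t * (q * 1) ∣ q^t * (Y₁ * u) := by
        rw [show q^t * (q * 1) = q^(t+1) by ring, show q^t * (Y₁ * u) = Y₁ * (q^t * u) by ring]
        exact hYD
      have := (mul_dvd_mul_iff_left hqt).mp h'
      rcases hqprime.dvd_mul.mp (by simpa using this) with h | h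
      · exact h
      · exact absurd h hpu
    have hc₁ : ¬ q ∣ c₁ := by
      intro hc
      have h1 : q ∣ Y₁ * b₁ + Z₁ * c₁ - 1 := hqD₁.trans hYZ
      have : q ∣ 1 := by
        have : (1:ℤ) = (Y₁ * b₁ + Z₁ * c₁ - 1) * (-1) + b₁ * Y₁ + Z₁ * c₁ := by ring
        rw [this]
        exact dvd_add (dvd_add (h1.mul_right _) (hY.mul_left _)) (hc.mul_left _)
      exact hqprime.not_unit (isUnit_of_dvd_one this)
    -- contradiction: q^(t+1) ∣ D₂ * c₁ forces q ∣ c₁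
    have hmm : q^(t+1) ∣ (D₂:ℤ) * c₁ := by
      have h1 : q^(t+1) ∣ (D₁:ℤ) * c₂ + b₁ * b₂ + (D₂:ℤ) * c₁ := hpa.trans hmain
      have h2 : q^(t+1) ∣ (D₁:ℤ) * c₂ := hpa.mul_right _
      have h3' : q^(t+1) ∣ b₁ * b₂ := hb₂.mul_left _
      have : (D₂:ℤ) * c₁ = ((D₁:ℤ) * c₂ + b₁ * b₂ + (D₂:ℤ) * c₁) - (D₁:ℤ) * c₂ - b₁ * b₂ := by ring
      rw [this]
      exact dvd_sub (dvd_sub h1 h2) h3'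
    apply hc₁
    rw [hu] at hmm
    have h' : q^t * (q * 1) ∣ q^t * (u * c₁) := by
      rw [show q^t * (q * 1) = q^(t+1) by ring, show q^t * (u * c₁) = q^t * u * c₁ by ring]
      exact hmm
    have := (mul_dvd_mul_iff_left hqt).mp h'
    rcases hqprime.dvd_mul.mp (by simpa using this) with h | h
    · exact absurd h hpu
    · exact h
  have hnr : ¬ q ∣ r₁ := fun h => hrs ⟨h, hps₁⟩
  have hb₁ : q^(t+1) ∣ b₁ :=
    (((hqprime.coprime_iff_not_dvd).mpr hnr).pow_left).dvd_of_dvd_mul_left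
      (hpa.trans h3)
  have hmm : q^(t+1) ∣ (D₂:ℤ) * c₁ := by
    have h1 : q^(t+1) ∣ (D₁:ℤ) * c₂ + b₁ * b₂ + (D₂:ℤ) * c₁ := hpa.trans hmain
    have h2 : q^(t+1) ∣ (D₁:ℤ) * c₂ := hpa.mul_right _
    have h3' : q^(t+1) ∣ b₁ * b₂ := hb₁.mul_right _
    have : (D₂:ℤ) * c₁ = ((D₁:ℤ) * c₂ + b₁ * b₂ + (D₂:ℤ) * c₁) - (D₁:ℤ) * c₂ - b₁ * b₂ := by ring
    rw [this]
    exact dvd_sub (dvd_sub h1 h2) h3'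
  have hc₁ : q ∣ c₁ := by
    rw [hu] at hmm
    have h' : q^t * (q * 1) ∣ q^t * (u * c₁) := by
      rw [show q^t * (q * 1) = q^(t+1) by ring, show q^t * (u * c₁) = q^t * u * c₁ by ring]
      exact hmm
    have := (mul_dvd_mul_iff_left hqt).mp h'
    rcases hqprime.dvd_mul.mp (by simpa using this) with h | h
    · exact absurd h hpu
    · exact h
  exact hg ⟨(dvd_pow_self q (Nat.succ_ne_zero t)).trans hb₁, hc₁⟩

lemma hrs_of_gcd (r s : ℤ) (rr ss : ℤ) (hr : r ∣ rr) (hs : s ∣ ss)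
    (hcop : Int.gcd rr ss = 1) (p : ℕ) (hp : p.Prime) : ¬((p:ℤ) ∣ r ∧ (p:ℤ) ∣ s) := by
  rintro ⟨h1, h2⟩
  have hd : (p:ℤ) ∣ (Int.gcd rr ss : ℤ) := Int.dvd_coe_gcd (h1.trans hr) (h2.trans hs)
  rw [hcop] at hd
  exact hp.one_lt.ne' (by exact_mod_cast Int.eq_one_of_dvd_one (by norm_num) hd)

lemma hg_of_gcd (b c D : ℕ) (hg : Nat.gcd (Nat.gcd b c) D = 1) (p : ℕ) (hp : p.Prime)
    (hpD : p ∣ D) : ¬((p:ℤ) ∣ (b:ℤ) ∧ (p:ℤ) ∣ (c:ℤ)) := by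
  rintro ⟨h1, h2⟩
  have hb : p ∣ b := Int.natCast_dvd_natCast.mp h1
  have hc : p ∣ c := Int.natCast_dvd_natCast.mp h2
  have : p ∣ 1 := hg ▸ Nat.dvd_gcd (Nat.dvd_gcd hb hc) hpD
  exact hp.one_lt.ne' (Nat.dvd_one.mp this)

lemma D_eq (r₁ s₁ r₂ s₂ : ℤ) (hcop : Int.gcd (r₁ * r₂) (s₁ * s₂) = 1)
    (D₁ D₂ : ℕ) (hD₁ : 0 < D₁) (hD₂ : 0 < D₂) (b₁ c₁ b₂ c₂ : ℕ)
    (hg1 : Nat.gcd (Nat.gcd b₁ c₁) D₁ = 1) (hg2 : Nat.gcd (Nat.gcd b₂ c₂) D₂ = 1)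
    (hmain : ((D₁:ℤ) * D₂) ∣ (D₁ : ℤ) * c₂ + (b₁ : ℤ) * b₂ + (D₂ : ℤ) * c₁)
    (h3 : (D₁:ℤ) ∣ r₁ * b₁)
    (h5 : (D₁:ℤ) ∣ s₁ * ((YZ D₁ (b₁:ℤ) (c₁:ℤ)).1 * D₂ - (YZ D₁ (b₁:ℤ) (c₁:ℤ)).2 * b₂))
    (h4 : (D₂:ℤ) ∣ r₂ * b₂)
    (h6 : (D₂:ℤ) ∣ s₂ * ((YZ D₂ (b₂:ℤ) (c₂:ℤ)).1 * D₁ - (YZ D₂ (b₂:ℤ) (c₂:ℤ)).2 * b₁)) :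
    D₁ = D₂ := by
  have hYZ₁ := YZ_spec' D₁ b₁ c₁ hg1
  have hYZ₂ := YZ_spec' D₂ b₂ c₂ hg2
  have hmain₁ : (D₁:ℤ) ∣ (D₁:ℤ) * c₂ + (b₁:ℤ) * b₂ + (D₂:ℤ) * c₁ :=
    (Dvd.intro _ rfl).trans hmain
  have hmain₂ : (D₂:ℤ) ∣ (D₂:ℤ) * c₁ + (b₂:ℤ) * b₁ + (D₁:ℤ) * c₂ := by
    rw [show (D₂:ℤ) * c₁ + (b₂:ℤ) * b₁ + (D₁:ℤ) * c₂
        = (D₁ : ℤ) * c₂ + (b₁ : ℤ) * b₂ + (D₂ : ℤ) * c₁ by ring]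
    exact (Dvd.intro_left _ rfl).trans hmain
  have key1 : ∀ p : ℕ, p.Prime → D₁.factorization p ≤ D₂.factorization p := by
    intro p hp
    by_contra hlt
    push_neg at hlt
    set t := D₂.factorization p with ht
    have hpa : p^(t+1) ∣ D₁ := (Nat.Prime.pow_dvd_iff_le_factorization hp hD₁.ne').mpr hlt
    have hpb : p^t ∣ D₂ := (Nat.Prime.pow_dvd_iff_le_factorization hp hD₂.ne').mpr le_rfl
    have hpb1 : ¬ p^(t+1) ∣ D₂ := fun h =>
      (Nat.lt_irrefl t) (Nat.lt_of_succ_le ((Nat.Prime.pow_dvd_iff_le_factorization hp hD₂.ne').mp h))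
    exact core_contra p hp t D₁ D₂ (by exact_mod_cast hpa) (by exact_mod_cast hpb)
      (by exact_mod_cast hpb1) r₁ s₁
      (hrs_of_gcd r₁ s₁ _ _ (Dvd.intro _ rfl) (Dvd.intro _ rfl) hcop p hp)
      b₁ c₁ b₂ c₂ _ _ hmain₁ hYZ₁ h3 h5
      (hg_of_gcd b₁ c₁ D₁ hg1 p hp ((dvd_pow_self p (Nat.succ_ne_zero t)).trans hpa))
  have key2 : ∀ p : ℕ, p.Prime → D₂.factorization p ≤ D₁.factorization p := by
    intro p hp
    by_contra hlt
    push_neg at hlt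
    set t := D₁.factorization p with ht
    have hpa : p^(t+1) ∣ D₂ := (Nat.Prime.pow_dvd_iff_le_factorization hp hD₂.ne').mpr hlt
    have hpb : p^t ∣ D₁ := (Nat.Prime.pow_dvd_iff_le_factorization hp hD₁.ne').mpr le_rfl
    have hpb1 : ¬ p^(t+1) ∣ D₁ := fun h =>
      (Nat.lt_irrefl t) (Nat.lt_of_succ_le ((Nat.Prime.pow_dvd_iff_le_factorization hp hD₁.ne').mp h))
    exact core_contra p hp t D₂ D₁ (by exact_mod_cast hpa) (by exact_mod_cast hpb)
      (by exact_mod_cast hpb1) r₂ s₂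
      (hrs_of_gcd r₂ s₂ _ _ (Dvd.intro_left _ rfl) (Dvd.intro_left _ rfl) hcop p hp)
      b₂ c₂ b₁ c₁ _ _ hmain₂ hYZ₂ h4 h6
      (hg_of_gcd b₂ c₂ D₂ hg2 p hp ((dvd_pow_self p (Nat.succ_ne_zero t)).trans hpa))
  have hle1 : D₁.factorization ≤ D₂.factorization := by
    rw [Finsupp.le_def]
    intro p
    by_cases hp : p.Prime
    · exact key1 p hp
    · simp [Nat.factorization_eq_zero_of_not_prime _ hp]
  have hle2 : D₂.factorization ≤ D₁.factorization := by
    rw [Finsupp.le_def]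
    intro p
    by_cases hp : p.Prime
    · exact key2 p hp
    · simp [Nat.factorization_eq_zero_of_not_prime _ hp]
  exact Nat.dvd_antisymm ((Nat.factorization_le_iff_dvd hD₁.ne' hD₂.ne').mp hle1)
    ((Nat.factorization_le_iff_dvd hD₂.ne' hD₁.ne').mp hle2)

/-! ### the count in the case `D₁ = D₂` -/

lemma Q_iff (r₁ s₁ r₂ s₂ : ℤ) (hcop : Int.gcd (r₁ * r₂) (s₁ * s₂) = 1) (D : ℕ) (hD : 0 < D)
    (b₁ c₁ b₂ c₂ : ℕ) (hb₁ : b₁ < D) (hb₂ : b₂ < D) :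
    ((Nat.gcd (Nat.gcd b₁ c₁) D = 1 ∧ Nat.gcd (Nat.gcd b₂ c₂) D = 1 ∧
        (D : ℤ) * c₂ + (b₁ : ℤ) * b₂ + (D : ℤ) * c₁ ≡ 0 [ZMOD ((D : ℤ) * D)])
      ∧ (D:ℤ) ∣ r₁ * b₁
      ∧ (D:ℤ) ∣ s₁ * ((YZ D (b₁:ℤ) (c₁:ℤ)).1 * D - (YZ D (b₁:ℤ) (c₁:ℤ)).2 * b₂)
      ∧ (D:ℤ) ∣ s₂ * ((YZ D (b₂:ℤ) (c₂:ℤ)).1 * D - (YZ D (b₂:ℤ) (c₂:ℤ)).2 * b₁)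
      ∧ (D:ℤ) ∣ r₂ * b₂)
    ↔ (b₁ = 0 ∧ b₂ = 0 ∧ Nat.gcd c₁ D = 1 ∧ Nat.gcd c₂ D = 1 ∧ (D:ℤ) ∣ (c₁:ℤ) + (c₂:ℤ)) := by
  have hDz : ((D:ℤ)) ≠ 0 := Int.natCast_ne_zero.mpr hD.ne'
  constructor
  · rintro ⟨⟨hg1, hg2, hm⟩, h3, h5, h6, h4⟩
    have hYZ₁ := YZ_spec' D b₁ c₁ hg1
    have hYZ₂ := YZ_spec' D b₂ c₂ hg2
    have hmdvd : ((D:ℤ) * D) ∣ (D : ℤ) * c₂ + (b₁ : ℤ) * b₂ + (D : ℤ) * c₁ :=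
      (Int.modEq_zero_iff_dvd).mp hm
    have hmain₁ : (D:ℤ) ∣ (D:ℤ) * c₂ + (b₁:ℤ) * b₂ + (D:ℤ) * c₁ :=
      (Dvd.intro _ rfl).trans hmdvd
    have hmain₂ : (D:ℤ) ∣ (D:ℤ) * c₁ + (b₂:ℤ) * b₁ + (D:ℤ) * c₂ := by
      rw [show (D:ℤ) * c₁ + (b₂:ℤ) * b₁ + (D:ℤ) * c₂
          = (D : ℤ) * c₂ + (b₁ : ℤ) * b₂ + (D : ℤ) * c₁ by ring]
      exact hmain₁
    have h5c : (D:ℤ) ∣ s₁ * b₂ := sb2_dvd D D s₁ b₁ c₁ b₂ c₂ _ _ hmain₁ hYZ₁ h5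
    have h6c : (D:ℤ) ∣ s₂ * b₁ := sb2_dvd D D s₂ b₂ c₂ b₁ c₁ _ _ hmain₂ hYZ₂ h6
    have hco : IsCoprime (r₁ * r₂) (s₁ * s₂) := Int.isCoprime_iff_gcd_eq_one.mpr hcop
    have hco12 : IsCoprime r₁ s₂ :=
      (hco.of_isCoprime_of_dvd_left (Dvd.intro _ rfl)).of_isCoprime_of_dvd_right
        (Dvd.intro_left _ rfl)
    have hco21 : IsCoprime r₂ s₁ :=
      (hco.of_isCoprime_of_dvd_left (Dvd.intro_left _ rfl)).of_isCoprime_of_dvd_right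
        (Dvd.intro _ rfl)
    have hb₁0 : b₁ = 0 := by
      obtain ⟨u, v, huv⟩ := hco12
      have : (D:ℤ) ∣ (b₁:ℤ) := by
        rw [show (b₁:ℤ) = u * (r₁ * b₁) + v * (s₂ * b₁) by
          rw [show u * (r₁ * b₁) + v * (s₂ * b₁) = (u * r₁ + v * s₂) * b₁ by ring, huv, one_mul]]
        exact dvd_add (h3.mul_left u) (h6c.mul_left v)
      exact Nat.eq_zero_of_dvd_of_lt (Int.natCast_dvd_natCast.mp this) hb₁
    have hb₂0 : b₂ = 0 := by
      obtain ⟨u, v, huv⟩ := hco21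
      have : (D:ℤ) ∣ (b₂:ℤ) := by
        rw [show (b₂:ℤ) = u * (r₂ * b₂) + v * (s₁ * b₂) by
          rw [show u * (r₂ * b₂) + v * (s₁ * b₂) = (u * r₂ + v * s₁) * b₂ by ring, huv, one_mul]]
        exact dvd_add (h4.mul_left u) (h5c.mul_left v)
      exact Nat.eq_zero_of_dvd_of_lt (Int.natCast_dvd_natCast.mp this) hb₂
    subst hb₁0; subst hb₂0
    refine ⟨rfl, rfl, by simpa using hg1, by simpa using hg2, ?_⟩
    have : ((D:ℤ) * D) ∣ (D:ℤ) * ((c₁:ℤ) + (c₂:ℤ)) := by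
      rw [show (D:ℤ) * ((c₁:ℤ) + (c₂:ℤ)) = (D : ℤ) * c₂ + ((0:ℕ) : ℤ) * ((0:ℕ):ℤ) + (D : ℤ) * c₁ by
        push_cast; ring]
      exact hmdvd
    exact (mul_dvd_mul_iff_left hDz).mp this
  · rintro ⟨rfl, rfl, hg1, hg2, hcc⟩
    refine ⟨⟨by simpa using hg1, by simpa using hg2, ?_⟩, by simp, ?_, ?_, by simp⟩
    · apply Int.modEq_zero_iff_dvd.mpr
      rw [show (D : ℤ) * c₂ + ((0:ℕ) : ℤ) * ((0:ℕ):ℤ) + (D : ℤ) * c₁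
          = (D:ℤ) * ((c₁:ℤ) + (c₂:ℤ)) by push_cast; ring]
      exact mul_dvd_mul_left _ hcc
    · rw [show s₁ * ((YZ D ((0:ℕ):ℤ) (c₁:ℤ)).1 * D - (YZ D ((0:ℕ):ℤ) (c₁:ℤ)).2 * ((0:ℕ):ℤ))
          = (s₁ * (YZ D ((0:ℕ):ℤ) (c₁:ℤ)).1) * D by push_cast; ring]
      exact Dvd.intro_left _ rfl
    · rw [show s₂ * ((YZ D ((0:ℕ):ℤ) (c₂:ℤ)).1 * D - (YZ D ((0:ℕ):ℤ) (c₂:ℤ)).2 * ((0:ℕ):ℤ))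
          = (s₂ * (YZ D ((0:ℕ):ℤ) (c₂:ℤ)).1) * D by push_cast; ring]
      exact Dvd.intro_left _ rfl

lemma inner_c2 (D : ℕ) (hD : 0 < D) (c₁ : ℕ) (hc₁ : c₁ < D) (hg : Nat.gcd c₁ D = 1) :
    ∑ c₂ ∈ Finset.range D, (if Nat.gcd c₂ D = 1 ∧ (D:ℤ) ∣ (c₁:ℤ) + (c₂:ℤ) then (1:ℂ) else 0)
      = 1 := by
  set c₀ := (D - c₁) % D with hc₀
  have hc₀lt : c₀ < D := Nat.mod_lt _ hD
  have hdvd₀ : D ∣ c₁ + c₀ := by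
    rcases Nat.eq_zero_or_pos c₁ with h0 | hpos
    · subst h0
      have hD1 : D = 1 := by simpa using hg
      subst hD1; simp
    · have hlt : D - c₁ < D := by omega
      have : c₀ = D - c₁ := by rw [hc₀, Nat.mod_eq_of_lt hlt]
      rw [this, show c₁ + (D - c₁) = D by omega]
    -- gcd at c₀
  have hgcd₀ : Nat.gcd c₀ D = 1 := by
    rcases Nat.eq_zero_or_pos c₁ with h0 | hpos
    · subst h0
      have hD1 : D = 1 := by simpa using hg
      subst hD1; simp
    · have hlt : D - c₁ < D := by omega
      have hc : c₀ = D - c₁ := by rw [hc₀, Nat.mod_eq_of_lt hlt]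
      rw [hc]
      have hdc : Nat.gcd (D - c₁) D ∣ c₁ := by
        have h1 : Nat.gcd (D - c₁) D ∣ D := Nat.gcd_dvd_right _ _
        have h2 : Nat.gcd (D - c₁) D ∣ D - c₁ := Nat.gcd_dvd_left _ _
        have := Nat.dvd_sub h1 h2
        rwa [show D - (D - c₁) = c₁ by omega] at this
      have : Nat.gcd (D - c₁) D ∣ 1 := hg ▸ Nat.dvd_gcd hdc (Nat.gcd_dvd_right _ _)
      exact Nat.dvd_one.mp this
  rw [Finset.sum_eq_single_of_mem c₀ (Finset.mem_range.mpr hc₀lt)]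
  · rw [if_pos ⟨hgcd₀, by exact_mod_cast Int.natCast_dvd_natCast.mpr hdvd₀⟩]
  · intro b hb hne
    rw [if_neg]
    rintro ⟨hgb, hdvd⟩
    apply hne
    have hbd : D ∣ c₁ + b := by
      have : (D:ℤ) ∣ ((c₁ + b : ℕ) : ℤ) := by push_cast; exact hdvd
      exact_mod_cast this
    have hmod : b ≡ c₀ [MOD D] := by
      have h1 : c₁ + b ≡ 0 [MOD D] := (Nat.modEq_zero_iff_dvd).mpr hbd
      have h2 : c₁ + c₀ ≡ 0 [MOD D] := (Nat.modEq_zero_iff_dvd).mpr hdvd₀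
      exact Nat.ModEq.add_left_cancel' c₁ (h1.trans h2.symm)
    have := hmod
    unfold Nat.ModEq at this
    rw [Nat.mod_eq_of_lt (Finset.mem_range.mp hb), Nat.mod_eq_of_lt hc₀lt] at this
    exact this

lemma count_eq_totient (r₁ s₁ r₂ s₂ : ℤ) (hcop : Int.gcd (r₁ * r₂) (s₁ * s₂) = 1)
    (D : ℕ) (hD : 0 < D) :
    (∑ b₁ ∈ Finset.range D, ∑ c₁ ∈ Finset.range D,
        ∑ b₂ ∈ Finset.range D, ∑ c₂ ∈ Finset.range D,
      if (Nat.gcd (Nat.gcd b₁ c₁) D = 1 ∧ Nat.gcd (Nat.gcd b₂ c₂) D = 1 ∧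
            (D : ℤ) * c₂ + (b₁ : ℤ) * b₂ + (D : ℤ) * c₁ ≡ 0 [ZMOD ((D : ℤ) * D)])
          ∧ (D:ℤ) ∣ r₁ * b₁
          ∧ (D:ℤ) ∣ s₁ * ((YZ D (b₁:ℤ) (c₁:ℤ)).1 * D - (YZ D (b₁:ℤ) (c₁:ℤ)).2 * b₂)
          ∧ (D:ℤ) ∣ s₂ * ((YZ D (b₂:ℤ) (c₂:ℤ)).1 * D - (YZ D (b₂:ℤ) (c₂:ℤ)).2 * b₁)
          ∧ (D:ℤ) ∣ r₂ * b₂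
        then (1:ℂ) else 0) = (Nat.totient D : ℂ) := by
  have hstep : ∀ b₁ ∈ Finset.range D, ∀ c₁ ∈ Finset.range D, ∀ b₂ ∈ Finset.range D,
      ∀ c₂ ∈ Finset.range D,
      (if (Nat.gcd (Nat.gcd b₁ c₁) D = 1 ∧ Nat.gcd (Nat.gcd b₂ c₂) D = 1 ∧
            (D : ℤ) * c₂ + (b₁ : ℤ) * b₂ + (D : ℤ) * c₁ ≡ 0 [ZMOD ((D : ℤ) * D)])
          ∧ (D:ℤ) ∣ r₁ * b₁
          ∧ (D:ℤ) ∣ s₁ * ((YZ D (b₁:ℤ) (c₁:ℤ)).1 * D - (YZ D (b₁:ℤ) (c₁:ℤ)).2 * b₂)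
          ∧ (D:ℤ) ∣ s₂ * ((YZ D (b₂:ℤ) (c₂:ℤ)).1 * D - (YZ D (b₂:ℤ) (c₂:ℤ)).2 * b₁)
          ∧ (D:ℤ) ∣ r₂ * b₂
        then (1:ℂ) else 0)
      = (if b₁ = 0 ∧ b₂ = 0 ∧ Nat.gcd c₁ D = 1 ∧ Nat.gcd c₂ D = 1 ∧ (D:ℤ) ∣ (c₁:ℤ) + (c₂:ℤ)
        then (1:ℂ) else 0) := by
    intro b₁ hb₁ c₁ _ b₂ hb₂ c₂ _
    rw [if_congr (Q_iff r₁ s₁ r₂ s₂ hcop D hD b₁ c₁ b₂ c₂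
      (Finset.mem_range.mp hb₁) (Finset.mem_range.mp hb₂)) rfl rfl]
  rw [Finset.sum_congr rfl fun b₁ hb₁ => Finset.sum_congr rfl fun c₁ hc₁ =>
    Finset.sum_congr rfl fun b₂ hb₂ => Finset.sum_congr rfl fun c₂ hc₂ =>
      hstep b₁ hb₁ c₁ hc₁ b₂ hb₂ c₂ hc₂]
  -- collapse b₁
  rw [Finset.sum_eq_single_of_mem 0 (Finset.mem_range.mpr hD) (fun b hb hne => by
    refine Finset.sum_eq_zero fun c₁ _ => Finset.sum_eq_zero fun b₂ _ =>
      Finset.sum_eq_zero fun c₂ _ => ?_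
    rw [if_neg]; rintro ⟨h0, _⟩; exact hne h0)]
  -- collapse b₂ inside each c₁
  have hb2step : ∀ c₁ ∈ Finset.range D,
      (∑ b₂ ∈ Finset.range D, ∑ c₂ ∈ Finset.range D,
        if (0:ℕ) = 0 ∧ b₂ = 0 ∧ Nat.gcd c₁ D = 1 ∧ Nat.gcd c₂ D = 1 ∧ (D:ℤ) ∣ (c₁:ℤ) + (c₂:ℤ)
        then (1:ℂ) else 0)
      = ∑ c₂ ∈ Finset.range D,
          if Nat.gcd c₁ D = 1 ∧ Nat.gcd c₂ D = 1 ∧ (D:ℤ) ∣ (c₁:ℤ) + (c₂:ℤ) then (1:ℂ) else 0 := by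
    intro c₁ _
    rw [Finset.sum_eq_single_of_mem 0 (Finset.mem_range.mpr hD) (fun b hb hne => by
      refine Finset.sum_eq_zero fun c₂ _ => ?_
      rw [if_neg]; rintro ⟨_, h0, _⟩; exact hne h0)]
    refine Finset.sum_congr rfl fun c₂ _ => ?_
    congr 1
    rw [eq_iff_iff]
    tauto
  rw [Finset.sum_congr rfl hb2step]
  -- now evaluate
  have hfin : ∀ c₁ ∈ Finset.range D,
      (∑ c₂ ∈ Finset.range D,
        if Nat.gcd c₁ D = 1 ∧ Nat.gcd c₂ D = 1 ∧ (D:ℤ) ∣ (c₁:ℤ) + (c₂:ℤ) then (1:ℂ) else 0)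
      = if Nat.gcd c₁ D = 1 then (1:ℂ) else 0 := by
    intro c₁ hc₁
    by_cases hg : Nat.gcd c₁ D = 1
    · rw [if_pos hg]
      have heq : (∑ c₂ ∈ Finset.range D,
          if Nat.gcd c₁ D = 1 ∧ Nat.gcd c₂ D = 1 ∧ (D:ℤ) ∣ (c₁:ℤ) + (c₂:ℤ) then (1:ℂ) else 0)
          = ∑ c₂ ∈ Finset.range D,
            if Nat.gcd c₂ D = 1 ∧ (D:ℤ) ∣ (c₁:ℤ) + (c₂:ℤ) then (1:ℂ) else 0 := by
        refine Finset.sum_congr rfl fun c₂ _ => ?_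
        congr 1
        rw [eq_iff_iff]
        tauto
      rw [heq]
      exact inner_c2 D hD c₁ (Finset.mem_range.mp hc₁) hg
    · rw [if_neg hg]
      refine Finset.sum_eq_zero fun c₂ _ => ?_
      rw [if_neg]; rintro ⟨h, _⟩; exact hg h
  rw [Finset.sum_congr rfl hfin]
  have hcopr : ∀ c₁ ∈ Finset.range D,
      (if Nat.gcd c₁ D = 1 then (1:ℂ) else 0) = if D.Coprime c₁ then (1:ℂ) else 0 := by
    intro c₁ _
    congr 1
    rw [eq_iff_iff]
    exact ⟨fun h => Nat.coprime_comm.mp h, fun h => Nat.coprime_comm.mp h⟩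
  rw [Finset.sum_congr rfl hcopr, Finset.sum_boole]
  simp [Nat.totient]

theorem shat_central_term (r₁ s₁ r₂ s₂ : ℤ)
    (hr₁ : r₁ ≠ 0) (hs₁ : s₁ ≠ 0) (hr₂ : r₂ ≠ 0) (hs₂ : s₂ ≠ 0)
    (hcop : Int.gcd (r₁ * r₂) (s₁ * s₂) = 1)
    (D₁ D₂ : ℕ) (hD₁ : 0 < D₁) (hD₂ : 0 < D₂) :
    (Shat r₁ s₁ r₂ s₂ 0 0 0 0 D₁ D₂ ≠ 0 → D₁ = D₂) ∧
      (D₁ = D₂ → Shat r₁ s₁ r₂ s₂ 0 0 0 0 D₁ D₂ = (Nat.totient D₁ : ℂ)) := by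
  constructor
  · intro hne
    rw [shat_eq_count r₁ s₁ r₂ s₂ D₁ D₂ hD₁ hD₂] at hne
    by_contra hd
    apply hne
    refine Finset.sum_eq_zero fun b₁ hb₁ => Finset.sum_eq_zero fun c₁ hc₁ =>
      Finset.sum_eq_zero fun b₂ hb₂ => Finset.sum_eq_zero fun c₂ hc₂ => ?_
    rw [if_neg]
    rintro ⟨⟨hg1, hg2, hm⟩, h3, h5, h6, h4⟩
    exact hd (D_eq r₁ s₁ r₂ s₂ hcop D₁ D₂ hD₁ hD₂ b₁ c₁ b₂ c₂ hg1 hg2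
      (Int.modEq_zero_iff_dvd.mp hm) h3 h5 h4 h6)
  · intro hdd
    subst hdd
    rw [shat_eq_count r₁ s₁ r₂ s₂ D₁ D₁ hD₁ hD₁]
    exact count_eq_totient r₁ s₁ r₂ s₂ hcop D₁ hD₁
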